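/- Let K be a centrally symmetric convex body in ℝⁿ and let P be a closed polygonal path that passes through two points x, y with ‖x‖_K ≥ 1 and ‖y‖_K ≥ 1, and through two antipodal points z and −z such that x and y lie in different connected components of P ∖ {z, −z}. Then the length of P measured in the norm ‖·‖_K is at least 4. -/
import Mathlib


open Finset

/-- The `K`-length of the closed polygon with vertices `x 0, x 1, …, x (m-1)`
(in this cyclic order), measured with the gauge (Minkowski functional) of `K`. -/
noncomputable def KLength {n : ℕ} (K : Set (EuclideanSpace ℝ (Fin n))) (m : ℕ)
    (x : ℕ → EuclideanSpace ℝ (Fin n)) : ℝ :=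
  ∑ i ∈ Finset.range m, gauge K (x ((i + 1) % m) - x i)

private lemma chain_aux {n : ℕ} {K : Set (EuclideanSpace ℝ (Fin n))}
    (hKconv : Convex ℝ K) (hKabs : Absorbent ℝ K)
    (g : ℕ → EuclideanSpace ℝ (Fin n)) (a : ℕ) :
    ∀ b, a ≤ b → gauge K (g b - g a) ≤ ∑ i ∈ Finset.Ico a b, gauge K (g (i + 1) - g i) := by
  intro b hb
  induction b, hb using Nat.le_induction with
  | base => simp [gauge_zero]
  | succ b hb ih =>
    rw [Finset.sum_Ico_succ_top hb]
    calc gauge K (g (b + 1) - g a)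
        ≤ gauge K (g b - g a) + gauge K (g (b + 1) - g b) := by
          have := gauge_add_le hKconv hKabs (g b - g a) (g (b + 1) - g b)
          rwa [sub_add_sub_cancel'] at this
      _ ≤ _ := by linarith

/-- A closed polygonal path passing through `x`, `z`, `y`, `-z` in this cyclic order,
with `‖x‖_K ≥ 1` and `‖y‖_K ≥ 1` (so `x` and `y` lie in different components of
the path minus `{z, -z}`), has `K`-length at least `4`. -/
theorem stmt0 {n m : ℕ} (K : Set (EuclideanSpace ℝ (Fin n)))
    (hKconv : Convex ℝ K) (hKcpt : IsCompact K) (hK0 : (0 : EuclideanSpace ℝ (Fin n)) ∈ interior K)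
    (hKsymm : K = -K)
    (v : ℕ → EuclideanSpace ℝ (Fin n)) (x y z : EuclideanSpace ℝ (Fin n))
    (a b c d : ℕ) (hab : a < b) (hbc : b < c) (hcd : c < d) (hdm : d < m)
    (hva : v a = x) (hvb : v b = z) (hvc : v c = y) (hvd : v d = -z)
    (hx : 1 ≤ gauge K x) (hy : 1 ≤ gauge K y) :
    4 ≤ KLength K m v := by
  have hKabs : Absorbent ℝ K := absorbent_nhds_zero (mem_interior_iff_mem_nhds.1 hK0)
  have hsymm : ∀ w ∈ K, -w ∈ K := by
    intro w hw
    rw [hKsymm] at hw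
    simpa using hw
  set g : ℕ → EuclideanSpace ℝ (Fin n) := fun i => v (i % m) with hg
  have hKL : KLength K m v = ∑ i ∈ Finset.range m, gauge K (g (i + 1) - g i) := by
    refine Finset.sum_congr rfl fun i hi => ?_
    rw [Finset.mem_range] at hi
    simp [hg, Nat.mod_eq_of_lt hi]
  have hmod : ∀ i, i < m → g i = v i := fun i hi => by simp [hg, Nat.mod_eq_of_lt hi]
  have hga : g a = x := by rw [hmod a (by omega), hva]
  have hgb : g b = z := by rw [hmod b (by omega), hvb]
  have hgc : g c = y := by rw [hmod c (by omega), hvc]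
  have hgd : g d = -z := by rw [hmod d (by omega), hvd]
  have hgm : g m = v 0 := by simp [hg]
  have hg0 : g 0 = v 0 := by
    rcases Nat.eq_zero_or_pos m with h | h
    · omega
    · simp [hg, Nat.mod_eq_of_lt h]
  -- split the sum
  have hsplit : ∑ i ∈ Finset.range m, gauge K (g (i + 1) - g i)
      = (∑ i ∈ Finset.Ico 0 a, gauge K (g (i + 1) - g i))
      + (∑ i ∈ Finset.Ico a b, gauge K (g (i + 1) - g i))
      + (∑ i ∈ Finset.Ico b c, gauge K (g (i + 1) - g i))
      + (∑ i ∈ Finset.Ico c d, gauge K (g (i + 1) - g i))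
      + (∑ i ∈ Finset.Ico d m, gauge K (g (i + 1) - g i)) := by
    rw [Finset.range_eq_Ico,
      ← Finset.sum_Ico_consecutive _ (Nat.zero_le a) (by omega : a ≤ m),
      ← Finset.sum_Ico_consecutive _ (by omega : a ≤ b) (by omega : b ≤ m),
      ← Finset.sum_Ico_consecutive _ (by omega : b ≤ c) (by omega : c ≤ m),
      ← Finset.sum_Ico_consecutive _ (by omega : c ≤ d) (by omega : d ≤ m)]
    ring
  have h1 := chain_aux hKconv hKabs g 0 a (by omega)
  have h2 := chain_aux hKconv hKabs g a b (by omega)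
  have h3 := chain_aux hKconv hKabs g b c (by omega)
  have h4 := chain_aux hKconv hKabs g c d (by omega)
  have h5 := chain_aux hKconv hKabs g d m (by omega)
  rw [hga, hg0] at h1
  rw [hga, hgb] at h2
  rw [hgb, hgc] at h3
  rw [hgc, hgd] at h4
  rw [hgd, hgm] at h5
  have hxz : gauge K (x + z) ≤ gauge K (x - v 0) + gauge K (v 0 - -z) := by
    have := gauge_add_le hKconv hKabs (x - v 0) (v 0 - -z)
    rwa [sub_add_sub_cancel, sub_neg_eq_add] at this
  have hxv0 : gauge K (x - v 0) = gauge K (v 0 - x) := by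
    rw [← gauge_neg hsymm (x - v 0), neg_sub]
  have hzx : gauge K (z - x) = gauge K (x - z) := by
    rw [← gauge_neg hsymm (z - x), neg_sub]
  have hzy : gauge K (-z - y) = gauge K (y + z) := by
    rw [← gauge_neg hsymm (-z - y)]; congr 1; abel
  have h2x : 2 ≤ gauge K (x - z) + gauge K (x + z) := by
    have := gauge_add_le hKconv hKabs (x - z) (x + z)
    have h2 : gauge K (x - z + (x + z)) = 2 * gauge K x := by
      have : x - z + (x + z) = (2 : ℝ) • x := by
        rw [two_smul]; abel
      rw [this, gauge_smul_of_nonneg (by norm_num : (0:ℝ) ≤ 2)]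
      simp
    rw [h2] at this
    linarith
  have h2y : 2 ≤ gauge K (y - z) + gauge K (y + z) := by
    have := gauge_add_le hKconv hKabs (y - z) (y + z)
    have h2 : gauge K (y - z + (y + z)) = 2 * gauge K y := by
      have : y - z + (y + z) = (2 : ℝ) • y := by
        rw [two_smul]; abel
      rw [this, gauge_smul_of_nonneg (by norm_num : (0:ℝ) ≤ 2)]
      simp
    rw [h2] at this
    linarith
  rw [hKL, hsplit]
  rw [hzx] at h2
  rw [hzy] at h4
  rw [hxv0] at hxz
  linarith
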